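/- arXiv:0801.4358 — 2 statements merged into one kernel-verified Lean document; each statement's English description precedes it below -/
import Mathlib

section
/- Let (F̃, F) be a linear almost Poisson morphism between D* → Q and D̄* → Q̄, with F surjective and F̃ fiberwise injective (and F(q)=F(q') implies F̃_q(D*_q) = F̃_{q'}(D*_{q'})). If α ∈ Γ(Λ^k D*) is (F̃,F)-related to ᾱ ∈ Γ(Λ^k D̄*) (i.e., Λ^k F̃ ∘ α = ᾱ ∘ F), then d^D α is (F̃,F)-related to d^{D̄} ᾱ. In particular, for k = 0: d^{D̄}f̄ ∘ F = F̃ ∘ d^D(f̄∘F) for every f̄ ∈ C^∞(Q̄). -/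
/- STATEMENT 14.
Let (F̃, F) be a linear almost Poisson morphism between D* → Q and D̄* → Q̄
(expressed, equivalently, through the induced skew-symmetric algebroid data: the
pullback of sections preserves brackets and anchors), with F surjective and F̃
fiberwise injective (and F(q) = F(q') ⇒ F̃_q(D*_q) = F̃_{q'}(D*_{q'})).
If α ∈ Γ(Λ^k D*) is (F̃,F)-related to ᾱ ∈ Γ(Λ^k D̄*) — i.e. Λ^k F̃ ∘ α = ᾱ ∘ F,
expressed on pulled-back tuples of sections — then d^Dα is (F̃,F)-related to
d^{D̄}ᾱ.  In particular, for k = 0: d^{D̄}f̄ ∘ F = F̃ ∘ d^D(f̄∘F), i.e.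
(d^{D̄}f̄)(X̄)(F q) = (d^D(f̄∘F))((F̃,F)*X̄)(q) for every f̄ ∈ C^∞(Q̄). -/

section

/-- Raw `k`-forms on a bundle `D` over `Q`. -/
abbrev RawForm {Q : Type*} (D : Q → Type*) [∀ q, AddCommGroup (D q)] [∀ q, Module ℝ (D q)]
    (k : ℕ) :=
  (Fin k → (∀ q, D q)) → Q → ℝ

def IsForm {Q : Type*} {D : Q → Type*} [∀ q, AddCommGroup (D q)] [∀ q, Module ℝ (D q)]
    {k : ℕ} (ω : RawForm D k) : Prop :=
  (∀ (X : Fin k → ∀ q, D q) (i : Fin k) (Y Z : ∀ q, D q),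
      ω (Function.update X i (fun q => Y q + Z q)) =
        ω (Function.update X i Y) + ω (Function.update X i Z)) ∧
  (∀ (X : Fin k → ∀ q, D q) (i : Fin k) (f : Q → ℝ) (Y : ∀ q, D q),
      ω (Function.update X i (fun q => f q • Y q)) = f * ω (Function.update X i Y)) ∧
  (∀ (X : Fin k → ∀ q, D q) (i j : Fin k), i ≠ j → X i = X j → ω X = 0)

/-- The exterior-type differential of the skew-symmetric algebroid (br, ρ). -/
noncomputable def dForm {Q : Type*} {D : Q → Type*} [∀ q, AddCommGroup (D q)]
    [∀ q, Module ℝ (D q)]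
    (br : (∀ q, D q) → (∀ q, D q) → (∀ q, D q))
    (ρ : (∀ q, D q) → (Q → ℝ) → (Q → ℝ)) :
    ∀ {k : ℕ}, RawForm D k → RawForm D (k + 1)
  | 0, α => fun X => ρ (X 0) (α (fun i => i.elim0))
  | (m + 1), α => fun X =>
      (∑ i : Fin (m + 2), ((-1 : ℝ) ^ (i : ℕ)) • ρ (X i) (α (Fin.removeNth i X)))
        + ∑ i : Fin (m + 2), ∑ j : Fin (m + 2),
            if h : (i : ℕ) < (j : ℕ) then
              ((-1 : ℝ) ^ ((i : ℕ) + (j : ℕ))) •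
                α (Fin.cons (br (X i) (X j))
                    (Fin.removeNth ⟨(i : ℕ), by have := j.isLt; omega⟩
                      (Fin.removeNth j X)))
            else 0

theorem stmt14 {Q Qb : Type*} (D : Q → Type*) (Db : Qb → Type*)
    [∀ q, AddCommGroup (D q)] [∀ q, Module ℝ (D q)]
    [∀ q, AddCommGroup (Db q)] [∀ q, Module ℝ (Db q)]
    -- the induced skew-symmetric algebroid structures on D and D̄
    (brD : (∀ q, D q) → (∀ q, D q) → (∀ q, D q))
    (ρD : (∀ q, D q) → (Q → ℝ) → (Q → ℝ))
    (brDb : (∀ q, Db q) → (∀ q, Db q) → (∀ q, Db q))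
    (ρDb : (∀ q, Db q) → (Qb → ℝ) → (Qb → ℝ))
    -- the vector bundle morphism (F̃, F): F surjective, F̃ fiberwise injective,
    -- with fibers over the same point having the same image
    (F : Q → Qb) (hFsurj : Function.Surjective F)
    (Ft : ∀ q : Q, Module.Dual ℝ (D q) →ₗ[ℝ] Module.Dual ℝ (Db (F q)))
    (hFtinj : ∀ q : Q, Function.Injective (Ft q))
    (hFtrange : ∀ (q q' : Q) (h : F q = F q'),
      Set.range (Ft q) =
        Set.range (fun γ : Module.Dual ℝ (D q') =>
          cast (congrArg (fun z => Module.Dual ℝ (Db z)) h.symm) (Ft q' γ)))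
    -- the pullback of sections, characterized by β((F̃,F)*X̄(q)) = F̃_q(β)(X̄(F q))
    (pull : (∀ q, Db q) → (∀ q, D q))
    (hpull : ∀ (Xb : ∀ q, Db q) (q : Q) (β : Module.Dual ℝ (D q)),
      β (pull Xb q) = Ft q β (Xb (F q)))
    -- (F̃, F) is a linear almost Poisson morphism: equivalently, the pullback of
    -- sections preserves the brackets and the anchors
    (hmorbr : ∀ Xb Yb : ∀ q, Db q, brD (pull Xb) (pull Yb) = pull (brDb Xb Yb))
    (hmoranc : ∀ (Xb : ∀ q, Db q) (fb : Qb → ℝ),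
      ρD (pull Xb) (fb ∘ F) = (ρDb Xb fb) ∘ F) :
    -- then (F̃,F)-relatedness of forms is preserved by the almost differentials:
    (∀ (k : ℕ) (α : RawForm D k) (αb : RawForm Db k), IsForm α → IsForm αb →
      (∀ (Xb : Fin k → ∀ q, Db q) (q : Q),
        α (fun i => pull (Xb i)) q = αb Xb (F q)) →
      (∀ (Xb : Fin (k + 1) → ∀ q, Db q) (q : Q),
        dForm brD ρD α (fun i => pull (Xb i)) q = dForm brDb ρDb αb Xb (F q))) ∧
    -- in particular for k = 0: d^{D̄}f̄ ∘ F = F̃ ∘ d^D(f̄∘F)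
    (∀ (fb : Qb → ℝ) (Xb : ∀ q, Db q) (q : Q),
      ρDb Xb fb (F q) = ρD (pull Xb) (fb ∘ F) q) := by
  constructor
  · intro k α αb hα hαb hrel Xb q
    cases k with
    | zero =>
      show ρD (pull (Xb 0)) (α (fun i => i.elim0)) q
          = ρDb (Xb 0) (αb (fun i => i.elim0)) (F q)
      have h1 : α (fun i => i.elim0) = (αb (fun i => i.elim0)) ∘ F := by
        funext q'
        have h2 : (fun i : Fin 0 => i.elim0 : Fin 0 → ∀ q, D q)
            = fun i => pull ((fun i : Fin 0 => i.elim0) i) := by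
          funext i; exact i.elim0
        rw [h2]
        exact hrel (fun i => i.elim0) q'
      rw [h1, hmoranc]
      rfl
    | succ m =>
      have hrm : ∀ (i : Fin (m + 2)),
          α (Fin.removeNth i (fun l => pull (Xb l)))
            = (αb (Fin.removeNth i Xb)) ∘ F := by
        intro i; funext q'
        exact hrel (Fin.removeNth i Xb) q'
      have hcons : ∀ (Z : ∀ q, Db q) (W : Fin m → ∀ q, Db q),
          (Fin.cons (pull Z) (fun l => pull (W l)) : Fin (m + 1) → ∀ q, D q)
            = fun l => pull ((Fin.cons Z W : Fin (m + 1) → ∀ q, Db q) l) := by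
        intro Z W; funext l
        refine Fin.cases ?_ ?_ l <;> simp
      simp only [dForm, Pi.add_apply, Finset.sum_apply, Pi.smul_apply, smul_eq_mul]
      congr 1
      · refine Finset.sum_congr rfl fun i _ => ?_
        have := congrFun (hmoranc (Xb i) (αb (Fin.removeNth i Xb))) q
        rw [← hrm i] at this
        rw [this]
        rfl
      · refine Finset.sum_congr rfl fun i _ => ?_
        refine Finset.sum_congr rfl fun j _ => ?_
        by_cases h : (i : ℕ) < (j : ℕ)
        · rw [dif_pos h, dif_pos h, Pi.smul_apply, Pi.smul_apply, smul_eq_mul, smul_eq_mul]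
          congr 1
          rw [hmorbr (Xb i) (Xb j)]
          have key : ∀ (Z : ∀ q, Db q) (W : Fin m → ∀ q, Db q),
              α (Fin.cons (pull Z) (fun l => pull (W l))) q
                = αb (Fin.cons Z W : Fin (m + 1) → ∀ q, Db q) (F q) := by
            intro Z W
            rw [hcons]
            exact hrel _ q
          exact key (brDb (Xb i) (Xb j))
            (Fin.removeNth ⟨(i : ℕ), by have := j.isLt; omega⟩ (Fin.removeNth j Xb))
        · rw [dif_neg h, dif_neg h]
          rfl
  · intro fb Xb q
    exact (congrFun (hmoranc Xb fb) q).symm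


end
end

section
/- With the nonholonomic bracket on D* induced from a Lie algebroid A, a metric G on A, and a subbundle D ⊆ A as above, the induced almost differential on D satisfies d^D α = Λ^k i_D*(d^A(P* ∘ α)) for every α ∈ Γ(Λ^k D*), where d^A is the Lie algebroid differential of A, P* : D* → A* the dual of the orthogonal projector, and i_D* : A* → D* the dual of the inclusion. -/
/- STATEMENT 18.
A → Q is a Lie algebroid with differential d^A; D ⊆ A a subbundle (inclusion i),
G a bundle metric with orthogonal projector P : A → D.  The nonholonomic
skew-symmetric algebroid on D is ⟦X,Y⟧_D = P⟦iX, iY⟧_A, ρ_D = ρ_A ∘ i, and its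
almost differential d^D (given by the usual Koszul-type formula) satisfies
  d^D α = Λ^k i_D* (d^A (P* ∘ α))
for every α ∈ Γ(Λ^k D*): evaluated on sections, (d^Dα)(X_0,…,X_k) equals
(d^A(α∘P))(iX_0,…,iX_k).  Forms are modelled as maps from tuples of sections to
functions on Q, with the differential `dForm` of a bracket/anchor pair. -/

section

theorem stmt18 {Q : Type*} (A : Q → Type*) (D : Q → Type*)
    [∀ q, AddCommGroup (A q)] [∀ q, Module ℝ (A q)]
    [∀ q, AddCommGroup (D q)] [∀ q, Module ℝ (D q)]
    -- the Lie algebroid structure on A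
    (brA : (∀ q, A q) → (∀ q, A q) → (∀ q, A q))
    (ρA : (∀ q, A q) → (Q → ℝ) → (Q → ℝ))
    (hskewA : ∀ X Y, brA X Y = - brA Y X)
    (hJacobiA : ∀ X Y Z, brA (brA X Y) Z + brA (brA Y Z) X + brA (brA Z X) Y = 0)
    (hρadd : ∀ X Y f, ρA (X + Y) f = ρA X f + ρA Y f)
    (hρfun : ∀ (g : Q → ℝ) X f, ρA (fun q => g q • X q) f = g * ρA X f)
    (hρder : ∀ X f g, ρA X (f * g) = f * ρA X g + g * ρA X f)
    (hleibnizA : ∀ X Y (f : Q → ℝ),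
      brA X (fun q => f q • Y q) = fun q => f q • brA X Y q + ρA X f q • Y q)
    -- the subbundle D (inclusion i) and the metric G with orthogonal projector P
    (i : ∀ q, D q →ₗ[ℝ] A q) (hiinj : ∀ q, Function.Injective (i q))
    (G : ∀ q, A q →ₗ[ℝ] A q →ₗ[ℝ] ℝ)
    (hGsymm : ∀ q a b, G q a b = G q b a)
    (hGpos : ∀ q a, a ≠ 0 → 0 < G q a a)
    (P : ∀ q, A q →ₗ[ℝ] D q)
    (hPi : ∀ q (d : D q), P q (i q d) = d)
    (hPorth : ∀ q (a : A q) (d : D q), G q (a - i q (P q a)) (i q d) = 0) :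
    -- d^D α = Λ^k i_D* (d^A (P* ∘ α)) for every k-form α on D:
    ∀ (k : ℕ) (α : RawForm D k), IsForm α →
      ∀ (X : Fin (k + 1) → ∀ q, D q) (q : Q),
        dForm (fun X' Y' => fun q' =>
            P q' (brA (fun r => i r (X' r)) (fun r => i r (Y' r)) q'))
          (fun X' => ρA (fun r => i r (X' r))) α X q
          =
          dForm brA ρA
            (fun Z => α (fun j => fun q' => P q' (Z j q')))
            (fun j => fun q' => i q' (X j q')) q := by
  intro k α hα X q
  cases k with
  | zero =>
    show ρA _ (α _) q = ρA _ (α _) q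
    have ht : (fun j : Fin 0 => j.elim0 : Fin 0 → ∀ q, D q) =
        (fun j => fun q' => P q' ((fun j => j.elim0 : Fin 0 → ∀ q, A q) j q')) := by
      funext j; exact j.elim0
    rw [ht]
  | succ m =>
    simp only [dForm]
    refine congrFun ?_ q
    congr 1
    · refine Finset.sum_congr rfl fun i' _ => ?_
      have ht : (Fin.removeNth i' X) =
          (fun j => fun q' => P q'
            (Fin.removeNth i' (fun j => fun q' => i q' (X j q')) j q')) := by
        funext j q'
        simp [Fin.removeNth, hPi]
      rw [ht]
    · refine Finset.sum_congr rfl fun i' _ => Finset.sum_congr rfl fun j' _ => ?_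
      by_cases h : (i' : ℕ) < (j' : ℕ)
      · rw [dif_pos h, dif_pos h]
        have ht : (Fin.cons (fun q' => P q' (brA (fun r => i r (X i' r))
              (fun r => i r (X j' r)) q'))
            (Fin.removeNth (⟨(i' : ℕ), by have := j'.isLt; omega⟩ : Fin (m + 1))
              (Fin.removeNth j' X)) : Fin (m + 1) → ∀ q, D q) =
            (fun l => fun q' => P q'
              ((Fin.cons (brA (fun q' => i q' (X i' q')) (fun q' => i q' (X j' q')))
                (Fin.removeNth (⟨(i' : ℕ), by have := j'.isLt; omega⟩ : Fin (m + 1))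
                  (Fin.removeNth j' (fun j => fun q' => i q' (X j q')))) :
                Fin (m + 1) → ∀ q, A q) l q')) := by
          funext l
          refine Fin.cases ?_ ?_ l
          · rfl
          · intro l'
            funext q'
            simp [Fin.removeNth, hPi]
        rw [ht]
      · rw [dif_neg h, dif_neg h]

end
end
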